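/- Fix a wavelength λ > 0 and an occlusion factor T ∈ ℝ with T > 0, and let s₁ and s₂ be two distinct points of EuclideanSpace ℝ (Fin 3). Define η_eff(s, r) = (λ/(4π‖s − r‖)) · exp(−i·(2π/λ)·‖s − r‖) · T for s ≠ r. Then the set {r : r ≠ s₁ ∧ r ≠ s₂ ∧ η_eff(s₁, r) = η_eff(s₂, r)} has Lebesgue measure zero. -/

import Mathlib

open Complex Real MeasureTheory

/-- For two distinct scatterers, the set of receiver positions at which the effective
propagation factors coincide has Lebesgue measure zero. -/
theorem eta_eff_equal_set_measure_zero
    (lam : ℝ) (hlam : 0 < lam) (T : ℝ) (hT : 0 < T)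
    (s₁ s₂ : EuclideanSpace ℝ (Fin 3)) (hs : s₁ ≠ s₂)
    (ηeff : EuclideanSpace ℝ (Fin 3) → EuclideanSpace ℝ (Fin 3) → ℂ)
    (hη : ∀ s r : EuclideanSpace ℝ (Fin 3), s ≠ r →
      ηeff s r = ((lam / (4 * Real.pi * ‖s - r‖) : ℝ) : ℂ) *
        Complex.exp (-Complex.I * ((2 * Real.pi / lam : ℝ) : ℂ) * ((‖s - r‖ : ℝ) : ℂ)) *
        (T : ℂ)) :
    volume {r : EuclideanSpace ℝ (Fin 3) |
      r ≠ s₁ ∧ r ≠ s₂ ∧ ηeff s₁ r = ηeff s₂ r} = 0 := by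
  have hsub : {r : EuclideanSpace ℝ (Fin 3) |
      r ≠ s₁ ∧ r ≠ s₂ ∧ ηeff s₁ r = ηeff s₂ r} ⊆
      (AffineSubspace.perpBisector s₁ s₂ : Set (EuclideanSpace ℝ (Fin 3))) := by
    rintro r ⟨h1, h2, heq⟩
    rw [SetLike.mem_coe, AffineSubspace.mem_perpBisector_iff_dist_eq']
    have d1 : (0:ℝ) < ‖s₁ - r‖ := by
      rw [norm_sub_pos_iff]; exact fun h => h1 h.symm
    have d2 : (0:ℝ) < ‖s₂ - r‖ := by
      rw [norm_sub_pos_iff]; exact fun h => h2 h.symm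
    rw [hη s₁ r (fun h => h1 h.symm), hη s₂ r (fun h => h2 h.symm)] at heq
    have habs := congrArg (fun z : ℂ => ‖z‖) heq
    have hre : ∀ d : ℝ, (-Complex.I * ((2 * Real.pi / lam : ℝ) : ℂ) * ((d : ℝ) : ℂ)).re = 0 := by
      intro d; simp
    simp only [norm_mul, Complex.norm_real, Real.norm_eq_abs, Complex.norm_exp, hre, Real.exp_zero,
      mul_one] at habs
    have hpi : (0:ℝ) < Real.pi := Real.pi_pos
    have e1 : |lam / (4 * Real.pi * ‖s₁ - r‖)| = lam / (4 * Real.pi * ‖s₁ - r‖) :=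
      abs_of_pos (by positivity)
    have e2 : |lam / (4 * Real.pi * ‖s₂ - r‖)| = lam / (4 * Real.pi * ‖s₂ - r‖) :=
      abs_of_pos (by positivity)
    rw [e1, e2, abs_of_pos hT] at habs
    have habs' := mul_right_cancel₀ hT.ne' habs
    have hnorm : ‖s₁ - r‖ = ‖s₂ - r‖ := by
      rw [div_eq_div_iff (by positivity) (by positivity)] at habs'
      have h4 : 4 * Real.pi * ‖s₂ - r‖ = 4 * Real.pi * ‖s₁ - r‖ := mul_left_cancel₀ hlam.ne' habs'
      exact (mul_left_cancel₀ (by positivity) h4).symm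
    rw [dist_eq_norm, dist_eq_norm]
    simpa [norm_sub_rev] using hnorm
  refine measure_mono_null hsub ?_
  exact MeasureTheory.Measure.addHaar_affineSubspace volume _
    (by simpa using hs)
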